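/- arXiv:2305.09150 — 2 statements merged into one kernel-verified Lean document; each statement's English description precedes it below -/
import Mathlib

section
/- For all W, V ∈ 𝔹, the norm |W|_𝔹 = sqrt(|Sc W|² + |Vec W|²) satisfies the submultiplicativity-type inequality |WV|_𝔹 ≤ √2 · |W|_𝔹 · |V|_𝔹. -/
noncomputable section

@[ext] structure Bicomplex : Type where
  sc : ℂ
  vec : ℂ

namespace Bicomplex

instance : Zero Bicomplex := ⟨⟨0, 0⟩⟩
instance : One Bicomplex := ⟨⟨1, 0⟩⟩
instance : Add Bicomplex := ⟨fun W V => ⟨W.sc + V.sc, W.vec + V.vec⟩⟩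
instance : Neg Bicomplex := ⟨fun W => ⟨-W.sc, -W.vec⟩⟩
instance : Mul Bicomplex :=
  ⟨fun W V => ⟨W.sc * V.sc - W.vec * V.vec, W.sc * V.vec + W.vec * V.sc⟩⟩

@[simp] lemma zero_sc : (0 : Bicomplex).sc = 0 := rfl
@[simp] lemma zero_vec : (0 : Bicomplex).vec = 0 := rfl
@[simp] lemma one_sc : (1 : Bicomplex).sc = 1 := rfl
@[simp] lemma one_vec : (1 : Bicomplex).vec = 0 := rfl
@[simp] lemma add_sc (W V : Bicomplex) : (W + V).sc = W.sc + V.sc := rfl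
@[simp] lemma add_vec (W V : Bicomplex) : (W + V).vec = W.vec + V.vec := rfl
@[simp] lemma neg_sc (W : Bicomplex) : (-W).sc = -W.sc := rfl
@[simp] lemma neg_vec (W : Bicomplex) : (-W).vec = -W.vec := rfl
@[simp] lemma mul_sc (W V : Bicomplex) : (W * V).sc = W.sc * V.sc - W.vec * V.vec := rfl
@[simp] lemma mul_vec (W V : Bicomplex) : (W * V).vec = W.sc * V.vec + W.vec * V.sc := rfl

instance : CommRing Bicomplex where
  add_assoc a b c := by ext <;> simp <;> ring
  zero_add a := by ext <;> simp
  add_zero a := by ext <;> simp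
  add_comm a b := by ext <;> simp <;> ring
  mul_assoc a b c := by ext <;> simp <;> ring
  one_mul a := by ext <;> simp
  mul_one a := by ext <;> simp
  left_distrib a b c := by ext <;> simp <;> ring
  right_distrib a b c := by ext <;> simp <;> ring
  mul_comm a b := by ext <;> simp <;> ring
  zero_mul a := by ext <;> simp
  mul_zero a := by ext <;> simp
  neg_add_cancel a := by ext <;> simp
  nsmul := nsmulRec
  zsmul := zsmulRec

/-- The canonical embedding of `ℂ` into the bicomplex numbers. -/
def oc (z : ℂ) : Bicomplex := ⟨z, 0⟩

/-- The second imaginary unit `j`. -/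
def jay : Bicomplex := ⟨0, 1⟩

/-- The bicomplex conjugation `conj (u + jv) = u - jv`. -/
def bconj (W : Bicomplex) : Bicomplex := ⟨W.sc, -W.vec⟩

/-- The idempotent `p⁺ = (1 + ij)/2`. -/
def pp : Bicomplex := ⟨1/2, Complex.I/2⟩

/-- The idempotent `p⁻ = (1 - ij)/2`. -/
def pm : Bicomplex := ⟨1/2, -(Complex.I/2)⟩

/-- The idempotent component `W⁺ = Sc W - i Vec W`. -/
def plus (W : Bicomplex) : ℂ := W.sc - Complex.I * W.vec

/-- The idempotent component `W⁻ = Sc W + i Vec W`. -/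
def minus (W : Bicomplex) : ℂ := W.sc + Complex.I * W.vec

/-- The involution `W† = p⁺ (W⁺)* + p⁻ (W⁻)*`. -/
def dag (W : Bicomplex) : Bicomplex :=
  pp * oc ((starRingEnd ℂ) (plus W)) + pm * oc ((starRingEnd ℂ) (minus W))

/-- The complex inner product `⟨W,V⟩_𝔹 = Sc (W V†)`. -/
def binner (W V : Bicomplex) : ℂ := (W * dag V).sc

/-- The norm `|W|_𝔹 = sqrt (|Sc W|² + |Vec W|²)`. -/
def bnorm (W : Bicomplex) : ℝ :=
  Real.sqrt (‖W.sc‖ ^ 2 + ‖W.vec‖ ^ 2)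

/-- The bicomplex exponential `e^W = p⁺ e^{W⁺} + p⁻ e^{W⁻}`. -/
def bexp (W : Bicomplex) : Bicomplex :=
  pp * oc (Complex.exp (plus W)) + pm * oc (Complex.exp (minus W))

/-- For `z = x + iy ∈ ℂ`, the bicomplex number `ẑ = x + jy`. -/
def hat (z : ℂ) : Bicomplex := ⟨(z.re : ℂ), (z.im : ℂ)⟩

end Bicomplex


lemma bicomplex_key (a b c d : ℂ) :
    ‖a*c - b*d‖^2 + ‖a*d + b*c‖^2 ≤
    2*(‖a‖^2 + ‖b‖^2)*(‖c‖^2 + ‖d‖^2) := by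
  have h1 : ‖a*c - b*d‖^2 + ‖a*d + b*c‖^2
      = (‖(a - Complex.I*b)*(c - Complex.I*d)‖^2
        + ‖(a + Complex.I*b)*(c + Complex.I*d)‖^2)/2 := by
    simp only [Complex.sq_norm, Complex.normSq_apply, Complex.mul_re, Complex.mul_im,
      Complex.sub_re, Complex.sub_im, Complex.add_re, Complex.add_im,
      Complex.I_re, Complex.I_im]
    ring
  have h2 : ‖a - Complex.I*b‖^2 + ‖a + Complex.I*b‖^2
      = 2*(‖a‖^2 + ‖b‖^2) := by
    simp only [Complex.sq_norm, Complex.normSq_apply, Complex.mul_re, Complex.mul_im,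
      Complex.sub_re, Complex.sub_im, Complex.add_re, Complex.add_im,
      Complex.I_re, Complex.I_im]
    ring
  have h3 : ‖c - Complex.I*d‖^2 + ‖c + Complex.I*d‖^2
      = 2*(‖c‖^2 + ‖d‖^2) := by
    simp only [Complex.sq_norm, Complex.normSq_apply, Complex.mul_re, Complex.mul_im,
      Complex.sub_re, Complex.sub_im, Complex.add_re, Complex.add_im,
      Complex.I_re, Complex.I_im]
    ring
  rw [h1, norm_mul, norm_mul]
  have p1 := sq_nonneg (‖a - Complex.I*b‖)
  have p2 := sq_nonneg (‖a + Complex.I*b‖)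
  have q1 := sq_nonneg (‖c - Complex.I*d‖)
  have q2 := sq_nonneg (‖c + Complex.I*d‖)
  nlinarith [mul_nonneg p1 q2, mul_nonneg p2 q1,
    mul_pow (‖a - Complex.I*b‖) (‖c - Complex.I*d‖) 2,
    mul_pow (‖a + Complex.I*b‖) (‖c + Complex.I*d‖) 2]

/-- `|WV|_𝔹 ≤ √2 |W|_𝔹 |V|_𝔹`. -/
theorem bicomplex_bnorm_mul_le (W V : Bicomplex) :
    Bicomplex.bnorm (W * V) ≤ Real.sqrt 2 * Bicomplex.bnorm W * Bicomplex.bnorm V := by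
  unfold Bicomplex.bnorm
  have hA : (0:ℝ) ≤ ‖W.sc‖ ^ 2 + ‖W.vec‖ ^ 2 := by positivity
  have h := bicomplex_key W.sc W.vec V.sc V.vec
  calc Real.sqrt (‖(W * V).sc‖ ^ 2 + ‖(W * V).vec‖ ^ 2)
      ≤ Real.sqrt (2 * (‖W.sc‖ ^ 2 + ‖W.vec‖ ^ 2)
          * (‖V.sc‖ ^ 2 + ‖V.vec‖ ^ 2)) := by
        apply Real.sqrt_le_sqrt
        simpa using h
    _ = Real.sqrt 2 * Real.sqrt (‖W.sc‖ ^ 2 + ‖W.vec‖ ^ 2)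
          * Real.sqrt (‖V.sc‖ ^ 2 + ‖V.vec‖ ^ 2) := by
        rw [Real.sqrt_mul (by positivity), Real.sqrt_mul (by norm_num)]
end
end

section
/- On the disk B_R(0) ⊂ ℂ, the functions {ẑⁿ, j·ẑⁿ : n ∈ ℕ₀} form an orthogonal family in L₂(B_R(0); 𝔹): for all n, m, ⟨ẑⁿ, j·ẑᵐ⟩ = 0, and ⟨Λẑⁿ, Λẑᵐ⟩ = (2πR^{n+m+2}/(n+m+2))·δ_{n,m} for Λ ∈ {1, j}. In particular ‖Λẑⁿ‖ = sqrt(π/(n+1))·R^{n+1}. -/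
noncomputable section

namespace Bicomplex

lemma plus_mul (W V : Bicomplex) : plus (W * V) = plus W * plus V := by
  simp [plus]; ring_nf; simp [Complex.I_sq]; ring

lemma minus_mul (W V : Bicomplex) : minus (W * V) = minus W * minus V := by
  simp [minus]; ring_nf; simp [Complex.I_sq]; ring

@[simp] lemma plus_one : plus 1 = 1 := by simp [plus]
@[simp] lemma minus_one : minus 1 = 1 := by simp [minus]

lemma plus_pow (W : Bicomplex) (n : ℕ) : plus (W ^ n) = plus W ^ n := by
  induction n with
  | zero => simp
  | succ k ih => rw [pow_succ, pow_succ, plus_mul, ih]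

lemma minus_pow (W : Bicomplex) (n : ℕ) : minus (W ^ n) = minus W ^ n := by
  induction n with
  | zero => simp
  | succ k ih => rw [pow_succ, pow_succ, minus_mul, ih]

@[simp] lemma plus_jay : plus jay = -Complex.I := by simp [plus, jay]
@[simp] lemma minus_jay : minus jay = Complex.I := by simp [minus, jay]

lemma plus_hat (z : ℂ) : plus (hat z) = (starRingEnd ℂ) z := by
  simp [plus, hat, Complex.ext_iff]

lemma minus_hat (z : ℂ) : minus (hat z) = z := by
  simp [minus, hat, Complex.ext_iff]

lemma binner_eq (W V : Bicomplex) :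
    binner W V = (plus W * (starRingEnd ℂ) (plus V) + minus W * (starRingEnd ℂ) (minus V)) / 2 := by
  simp [binner, dag, pp, pm, oc, plus, minus, map_add, map_sub, map_mul, Complex.conj_I]
  ring_nf

lemma bnorm_sq (W : Bicomplex) :
    bnorm W ^ 2 = (‖plus W‖ ^ 2 + ‖minus W‖ ^ 2) / 2 := by
  rw [bnorm, Real.sq_sqrt (by positivity)]
  simp [plus, minus, Complex.sq_norm, Complex.normSq_apply]
  ring

end Bicomplex

open MeasureTheory Set Complex

lemma integrableOn_pow_mul_conj_pow (R : ℝ) (n m : ℕ) :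
    IntegrableOn (fun z : ℂ => z ^ n * (starRingEnd ℂ) z ^ m) (Metric.ball (0 : ℂ) R) := by
  have hc : Continuous (fun z : ℂ => z ^ n * (starRingEnd ℂ) z ^ m) := by
    continuity
  exact (hc.continuousOn.integrableOn_compact (isCompact_closedBall 0 R)).mono_set
    Metric.ball_subset_closedBall

lemma key_integral (R : ℝ) (hR : 0 < R) (n m : ℕ) :
    ∫ z in Metric.ball (0 : ℂ) R, z ^ n * (starRingEnd ℂ) z ^ m
      = if n = m then ((2 * Real.pi * R ^ (n + m + 2) / (n + m + 2) : ℝ) : ℂ) else 0 := by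
  have h1 : ∫ z in Metric.ball (0 : ℂ) R, z ^ n * (starRingEnd ℂ) z ^ m
      = ∫ z : ℂ, Set.indicator (Metric.ball (0:ℂ) R)
          (fun z => z ^ n * (starRingEnd ℂ) z ^ m) z := by
    rw [integral_indicator Metric.isOpen_ball.measurableSet]
  rw [h1, ← Complex.integral_comp_polarCoord_symm, polarCoord_target]
  have h2 : ∀ p ∈ Set.Ioi (0:ℝ) ×ˢ Set.Ioo (-Real.pi) Real.pi,
      p.1 • Set.indicator (Metric.ball (0:ℂ) R)
          (fun z => z ^ n * (starRingEnd ℂ) z ^ m) (Complex.polarCoord.symm p)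
      = (Set.indicator (Set.Ioo (0:ℝ) R) (fun r => (r : ℂ) ^ (n + m + 1)) p.1)
          * Complex.exp (((n : ℂ) - m) * p.2 * Complex.I) := by
    rintro ⟨r, θ⟩ ⟨hr, hθ⟩
    simp only [Set.mem_Ioi] at hr
    have hz : Complex.polarCoord.symm (r, θ) = r * Complex.exp (θ * Complex.I) := by
      rw [Complex.polarCoord_symm_apply, Complex.exp_mul_I]
      push_cast
      ring
    have habs : ‖Complex.polarCoord.symm (r, θ)‖ = r := by
      rw [Complex.norm_polarCoord_symm, abs_of_pos hr]
    by_cases hlt : r < R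
    · have hmem : Complex.polarCoord.symm (r, θ) ∈ Metric.ball (0:ℂ) R := by
        rw [Metric.mem_ball, dist_zero_right, habs]; exact hlt
      rw [Set.indicator_of_mem hmem, Set.indicator_of_mem (by exact ⟨hr, hlt⟩)]
      rw [hz]
      have hconj : (starRingEnd ℂ) ((r:ℂ) * Complex.exp (θ * Complex.I))
          = r * Complex.exp (-(θ * Complex.I)) := by
        rw [map_mul, Complex.conj_ofReal, ← Complex.exp_conj]
        congr 2
        simp [Complex.ext_iff]
      rw [hconj, mul_pow, mul_pow, ← Complex.exp_nat_mul, ← Complex.exp_nat_mul]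
      have he : Complex.exp (((n : ℂ) - m) * (θ:ℂ) * Complex.I)
          = Complex.exp ((n:ℂ) * ((θ:ℂ) * Complex.I))
            * Complex.exp ((m:ℂ) * (-((θ:ℂ) * Complex.I))) := by
        rw [← Complex.exp_add]; ring_nf
      rw [Complex.real_smul]
      simp only
      rw [he]
      ring
    · have hmem : Complex.polarCoord.symm (r, θ) ∉ Metric.ball (0:ℂ) R := by
        rw [Metric.mem_ball, dist_zero_right, habs]; exact hlt
      rw [Set.indicator_of_notMem hmem, Set.indicator_of_notMem (by simp [Set.mem_Ioo, hlt])]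
      simp
  rw [setIntegral_congr_fun (by measurability) h2]
  rw [Measure.volume_eq_prod, setIntegral_prod_mul
    (fun r : ℝ => (Set.Ioo (0:ℝ) R).indicator (fun r => (r:ℂ) ^ (n + m + 1)) r)
    (fun θ : ℝ => Complex.exp (((n:ℂ) - m) * θ * Complex.I))]
  have hr_int : ∫ r in Set.Ioi (0:ℝ),
      Set.indicator (Set.Ioo (0:ℝ) R) (fun r => (r : ℂ) ^ (n + m + 1)) r
      = ((R ^ (n + m + 2) / (n + m + 2) : ℝ) : ℂ) := by
    rw [setIntegral_indicator measurableSet_Ioo]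
    rw [Set.Ioi_inter_Ioo, max_eq_right le_rfl]
    have : ∫ r in Set.Ioo (0:ℝ) R, (r : ℂ) ^ (n + m + 1)
        = ((∫ r in Set.Ioo (0:ℝ) R, r ^ (n + m + 1) : ℝ) : ℂ) := by
      simp_rw [← Complex.ofReal_pow]
      exact integral_ofReal
    rw [this, ← integral_Ioc_eq_integral_Ioo,
      ← intervalIntegral.integral_of_le hR.le, integral_pow]
    push_cast
    ring_nf
  rw [hr_int]
  by_cases hnm : n = m
  · subst hnm
    simp only [sub_self, zero_mul, Complex.exp_zero]
    simp only [if_true]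
    simp only [MeasureTheory.integral_const, Measure.restrict_apply MeasurableSet.univ,
      Set.univ_inter, Real.volume_Ioo]
    rw [measureReal_restrict_apply_univ, Real.volume_real_Ioo_of_le (by linarith [Real.pi_pos])]
    push_cast
    rw [Complex.real_smul]
    push_cast
    ring
  · rw [if_neg hnm]
    have hθ : ∫ θ in Set.Ioo (-Real.pi) Real.pi,
        Complex.exp (((n : ℂ) - m) * θ * Complex.I) = 0 := by
      have hc : ((n : ℂ) - m) * Complex.I ≠ 0 := by
        simp only [ne_eq, mul_eq_zero, Complex.I_ne_zero, or_false, sub_eq_zero]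
        exact_mod_cast fun h => hnm (Nat.cast_injective h)
      have : ∀ θ : ℝ, Complex.exp (((n : ℂ) - m) * θ * Complex.I)
          = Complex.exp ((((n:ℂ) - m) * Complex.I) * θ) := by
        intro θ; ring_nf
      simp_rw [this]
      rw [← integral_Ioc_eq_integral_Ioo,
        ← intervalIntegral.integral_of_le (by linarith [Real.pi_pos]),
        integral_exp_mul_complex hc]
      rw [div_eq_zero_iff]
      left
      rw [sub_eq_zero]
      have h5 : (((n:ℂ) - m) * Complex.I) * (Real.pi : ℂ)
          = (((n:ℂ) - m) * Complex.I) * ((-Real.pi : ℝ) : ℂ)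
            + (Int.cast ((n : ℤ) - m) : ℂ) * (2 * Real.pi * Complex.I) := by
        push_cast; ring
      rw [h5, Complex.exp_add, Complex.exp_int_mul_two_pi_mul_I, mul_one]
    rw [hθ, mul_zero]


open MeasureTheory in
lemma binner_hat_jay (z : ℂ) (n m : ℕ) :
    Bicomplex.binner (Bicomplex.hat z ^ n) (Bicomplex.jay * Bicomplex.hat z ^ m)
      = Complex.I / 2 * (z ^ m * (starRingEnd ℂ) z ^ n - z ^ n * (starRingEnd ℂ) z ^ m) := by
  simp only [Bicomplex.binner_eq, Bicomplex.plus_mul, Bicomplex.minus_mul, Bicomplex.plus_pow,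
    Bicomplex.minus_pow, Bicomplex.plus_hat, Bicomplex.minus_hat, Bicomplex.plus_jay,
    Bicomplex.minus_jay, map_mul, map_pow, map_neg, Complex.conj_conj, Complex.conj_I]
  ring

lemma binner_lam_hat (z : ℂ) (n m : ℕ) (Λ : Bicomplex) (hΛ : Λ = 1 ∨ Λ = Bicomplex.jay) :
    Bicomplex.binner (Λ * Bicomplex.hat z ^ n) (Λ * Bicomplex.hat z ^ m)
      = (1 / 2 : ℂ) * (z ^ m * (starRingEnd ℂ) z ^ n + z ^ n * (starRingEnd ℂ) z ^ m) := by
  rcases hΛ with rfl | rfl <;>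
    simp only [one_mul, Bicomplex.binner_eq, Bicomplex.plus_mul, Bicomplex.minus_mul,
      Bicomplex.plus_pow, Bicomplex.minus_pow, Bicomplex.plus_hat, Bicomplex.minus_hat,
      Bicomplex.plus_jay, Bicomplex.minus_jay, Bicomplex.plus_one, Bicomplex.minus_one,
      map_mul, map_pow, map_neg, map_one, Complex.conj_conj, Complex.conj_I] <;>
    ring_nf <;> simp only [Complex.I_sq] <;> ring_nf

lemma bnorm_lam_hat (z : ℂ) (n : ℕ) (Λ : Bicomplex) (hΛ : Λ = 1 ∨ Λ = Bicomplex.jay) :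
    Bicomplex.bnorm (Λ * Bicomplex.hat z ^ n) ^ 2 = ‖z‖ ^ (2 * n) := by
  rcases hΛ with rfl | rfl <;>
  · rw [Bicomplex.bnorm_sq]
    simp only [one_mul, Bicomplex.plus_mul, Bicomplex.minus_mul, Bicomplex.plus_pow,
      Bicomplex.minus_pow, Bicomplex.plus_hat, Bicomplex.minus_hat, Bicomplex.plus_jay,
      Bicomplex.minus_jay, Bicomplex.plus_one, Bicomplex.minus_one, map_mul, map_pow, map_neg,
      map_one, Complex.norm_conj, Complex.norm_I, norm_neg, norm_mul, norm_pow, one_mul]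
    ring

open MeasureTheory in
lemma abs_integral (R : ℝ) (hR : 0 < R) (n : ℕ) :
    ∫ z in Metric.ball (0 : ℂ) R, ‖z‖ ^ (2 * n)
      = Real.pi * R ^ (2 * n + 2) / (n + 1) := by
  have hk := key_integral R hR n n
  rw [if_pos rfl] at hk
  have h2 : ∫ z in Metric.ball (0 : ℂ) R, ((‖z‖ ^ (2 * n) : ℝ) : ℂ)
      = ∫ z in Metric.ball (0 : ℂ) R, z ^ n * (starRingEnd ℂ) z ^ n := by
    refine setIntegral_congr_fun measurableSet_ball (fun z _ => ?_)
    rw [← mul_pow, Complex.mul_conj, ← Complex.sq_norm]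
    push_cast
    rw [← pow_mul, mul_comm 2 n]
  have h4 : ((∫ z in Metric.ball (0 : ℂ) R, ‖z‖ ^ (2 * n) : ℝ) : ℂ)
      = ((2 * Real.pi * R ^ (n + n + 2) / (n + n + 2) : ℝ) : ℂ) := by
    rw [← hk, ← h2]
    exact integral_ofReal.symm
  rw [Complex.ofReal_injective h4, show n + n + 2 = 2 * n + 2 from by ring]
  have hd : ((n : ℝ) + 1) ≠ 0 := by positivity
  field_simp
  ring


open MeasureTheory in
/-- on the disk `B_R(0) ⊂ ℂ`, the functions `ẑⁿ, jẑⁿ` form an orthogonal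
family in `L₂(B_R(0); 𝔹)`, with the stated inner products and norms. -/
theorem bicomplex_powers_orthogonal (R : ℝ) (hR : 0 < R) :
    (∀ n m : ℕ,
      ∫ z in Metric.ball (0 : ℂ) R,
        Bicomplex.binner ((Bicomplex.hat z) ^ n) (Bicomplex.jay * (Bicomplex.hat z) ^ m)
        = 0) ∧
    (∀ n m : ℕ, ∀ Λ : Bicomplex, Λ = 1 ∨ Λ = Bicomplex.jay →
      ∫ z in Metric.ball (0 : ℂ) R,
        Bicomplex.binner (Λ * (Bicomplex.hat z) ^ n) (Λ * (Bicomplex.hat z) ^ m)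
        = if n = m then
            ((2 * Real.pi * R ^ (n + m + 2) / (n + m + 2) : ℝ) : ℂ)
          else 0) ∧
    (∀ n : ℕ, ∀ Λ : Bicomplex, Λ = 1 ∨ Λ = Bicomplex.jay →
      Real.sqrt (∫ z in Metric.ball (0 : ℂ) R,
          (Bicomplex.bnorm (Λ * (Bicomplex.hat z) ^ n)) ^ 2)
        = Real.sqrt (Real.pi / (n + 1)) * R ^ (n + 1)) := by
  refine ⟨fun n m => ?_, fun n m Λ hΛ => ?_, fun n Λ hΛ => ?_⟩
  · simp_rw [binner_hat_jay]
    rw [integral_const_mul,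
      integral_sub (integrableOn_pow_mul_conj_pow R m n) (integrableOn_pow_mul_conj_pow R n m),
      key_integral R hR m n, key_integral R hR n m]
    by_cases h : n = m
    · subst h; simp
    · rw [if_neg h, if_neg (fun hh => h hh.symm)]; simp
  · simp_rw [binner_lam_hat _ n m Λ hΛ]
    rw [integral_const_mul,
      integral_add (integrableOn_pow_mul_conj_pow R m n) (integrableOn_pow_mul_conj_pow R n m),
      key_integral R hR m n, key_integral R hR n m]
    by_cases h : n = m
    · subst h
      rw [if_pos rfl]
      push_cast
      ring
    · rw [if_neg h, if_neg (fun hh => h hh.symm)]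
      simp
  · have hcong : ∫ z in Metric.ball (0 : ℂ) R, (Bicomplex.bnorm (Λ * (Bicomplex.hat z) ^ n)) ^ 2
        = ∫ z in Metric.ball (0 : ℂ) R, ‖z‖ ^ (2 * n) :=
      setIntegral_congr_fun measurableSet_ball (fun z _ => bnorm_lam_hat z n Λ hΛ)
    rw [hcong, abs_integral R hR n]
    have h1 : Real.pi * R ^ (2 * n + 2) / (n + 1)
        = (Real.pi / (n + 1)) * (R ^ (n + 1)) ^ 2 := by
      rw [← pow_mul]
      ring
    rw [h1, Real.sqrt_mul (by positivity), Real.sqrt_sq (by positivity)]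
end
end
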